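/- Let q ≥ 2 be an integer. The function β ↦ (Σ_{i∈Z_q} w_L(i) e^{−β w_L(i)}) / (Σ_{i∈Z_q} e^{−β w_L(i)}) is strictly decreasing on ℝ and maps ℝ bijectively onto the open interval (0, ⌊q/2⌋). In particular, for every real δ with 0 < δ < ⌊q/2⌋ there is a unique real β such that Σ_{i∈Z_q} w_L(i) e^{−β w_L(i)} = δ · Σ_{i∈Z_q} e^{−β w_L(i)}; moreover β > 0 if and only if δ < δ_q, and β = 0 if and only if δ = δ_q. -/

import Mathlib

/-- The Lee weight of the residue `i ∈ {0,…,q-1}` is `min(i, q-i)`. -/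
def leeW (q i : ℕ) : ℕ := min i (q - i)

/-- `Σ_{i∈Z_q} w_L(i) e^{-β w_L(i)}`. -/
noncomputable def numFun (q : ℕ) (β : ℝ) : ℝ :=
  ∑ i ∈ Finset.range q, (leeW q i : ℝ) * Real.exp (-β * (leeW q i : ℝ))

/-- The normalization constant `Z(β) = Σ_{i∈Z_q} e^{-β w_L(i)}`. -/
noncomputable def Zfun (q : ℕ) (β : ℝ) : ℝ :=
  ∑ i ∈ Finset.range q, Real.exp (-β * (leeW q i : ℝ))

/-- The mean Lee weight under the Boltzmann distribution with parameter `β`. -/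
noncomputable def Ffun (q : ℕ) (β : ℝ) : ℝ := numFun q β / Zfun q β

/-- `δ_q`, the mean Lee weight of a uniform element of `Z_q`. -/
noncomputable def deltaQ (q : ℕ) : ℝ :=
  if q % 2 = 0 then (q : ℝ) / 4 else ((q : ℝ) ^ 2 - 1) / (4 * q)

open Filter Topology

lemma leeSum (q : ℕ) : 4 * (∑ i ∈ Finset.range q, leeW q i) + q % 2 = q * q := by
  induction q using Nat.strong_induction_on with
  | _ q ih =>
    match q with
    | 0 => simp
    | 1 => simp [leeW]
    | (n+2) =>
      have key : (∑ i ∈ Finset.range (n+2), leeW (n+2) i)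
          = (∑ i ∈ Finset.range n, leeW n i) + (n + 1) := by
        rw [Finset.sum_range_succ']
        have h0 : leeW (n+2) 0 = 0 := by simp [leeW]
        rw [h0, add_zero]
        have hcong : ∀ j ∈ Finset.range (n+1), leeW (n+2) (j+1) = leeW n j + 1 := by
          intro j hj
          simp only [Finset.mem_range] at hj
          simp only [leeW]
          omega
        rw [Finset.sum_congr rfl hcong, Finset.sum_add_distrib, Finset.sum_range_succ]
        have hn : leeW n n = 0 := by simp [leeW]
        simp [hn]
      have := ih n (by omega)
      rw [key]
      have hmod : (n+2) % 2 = n % 2 := by omega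
      ring_nf
      ring_nf at this
      omega

lemma Zpos (q : ℕ) (hq : 2 ≤ q) (β : ℝ) : 0 < Zfun q β :=
  Finset.sum_pos (fun i _ => Real.exp_pos _) ⟨0, by simp; omega⟩

lemma lee1 (q : ℕ) (hq : 2 ≤ q) : leeW q 1 = 1 := by simp [leeW]; omega

lemma numPos (q : ℕ) (hq : 2 ≤ q) (β : ℝ) : 0 < numFun q β := by
  apply Finset.sum_pos'
  · intro i _
    positivity
  · refine ⟨1, by simp; omega, ?_⟩
    rw [lee1 q hq]
    positivity

lemma crossSign {β₁ β₂ : ℝ} (h : β₁ < β₂) (a b : ℝ) :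
    0 ≤ (a - b) * (Real.exp (-β₁ * a) * Real.exp (-β₂ * b)
        - Real.exp (-β₁ * b) * Real.exp (-β₂ * a)) := by
  rcases le_total a b with hab | hab
  · have hr : (a - b) * (Real.exp (-β₁ * a) * Real.exp (-β₂ * b)
        - Real.exp (-β₁ * b) * Real.exp (-β₂ * a))
        = (b - a) * (Real.exp (-β₁ * b) * Real.exp (-β₂ * a)
        - Real.exp (-β₁ * a) * Real.exp (-β₂ * b)) := by ring
    rw [hr]
    apply mul_nonneg (by linarith)
    rw [← Real.exp_add, ← Real.exp_add, sub_nonneg, Real.exp_le_exp]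
    nlinarith
  · apply mul_nonneg (by linarith)
    rw [← Real.exp_add, ← Real.exp_add, sub_nonneg, Real.exp_le_exp]
    nlinarith

lemma FstrictAnti (q : ℕ) (hq : 2 ≤ q) : StrictAnti (Ffun q) := by
  intro β₁ β₂ h
  have hZ1 := Zpos q hq β₁
  have hZ2 := Zpos q hq β₂
  rw [Ffun, Ffun, div_lt_div_iff₀ hZ2 hZ1]
  have key : 0 < numFun q β₁ * Zfun q β₂ - numFun q β₂ * Zfun q β₁ := by
    set w : ℕ → ℝ := fun i => (leeW q i : ℝ) with hw
    set g : ℕ → ℕ → ℝ := fun i j => (w i - w j) *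
      (Real.exp (-β₁ * w i) * Real.exp (-β₂ * w j)
        - Real.exp (-β₁ * w j) * Real.exp (-β₂ * w i)) with hg
    have e1 : numFun q β₁ * Zfun q β₂
        = ∑ i ∈ Finset.range q, ∑ j ∈ Finset.range q,
            w i * Real.exp (-β₁ * w i) * Real.exp (-β₂ * w j) := by
      rw [numFun, Zfun, Finset.sum_mul_sum]
    have e2 : numFun q β₂ * Zfun q β₁
        = ∑ i ∈ Finset.range q, ∑ j ∈ Finset.range q,
            w i * Real.exp (-β₂ * w i) * Real.exp (-β₁ * w j) := by
      rw [numFun, Zfun, Finset.sum_mul_sum]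
    have e1' : numFun q β₁ * Zfun q β₂
        = ∑ i ∈ Finset.range q, ∑ j ∈ Finset.range q,
            w j * Real.exp (-β₁ * w j) * Real.exp (-β₂ * w i) := by
      rw [e1]; exact Finset.sum_comm
    have e2' : numFun q β₂ * Zfun q β₁
        = ∑ i ∈ Finset.range q, ∑ j ∈ Finset.range q,
            w j * Real.exp (-β₂ * w j) * Real.exp (-β₁ * w i) := by
      rw [e2]; exact Finset.sum_comm
    have twoD : 2 * (numFun q β₁ * Zfun q β₂ - numFun q β₂ * Zfun q β₁)
        = ∑ i ∈ Finset.range q, ∑ j ∈ Finset.range q, g i j := by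
      have : 2 * (numFun q β₁ * Zfun q β₂ - numFun q β₂ * Zfun q β₁)
          = (numFun q β₁ * Zfun q β₂ - numFun q β₂ * Zfun q β₁)
            + (numFun q β₁ * Zfun q β₂ - numFun q β₂ * Zfun q β₁) := by ring
      rw [this]
      nth_rewrite 1 [e1, e2']
      nth_rewrite 1 [e1', e2]
      rw [← Finset.sum_sub_distrib, ← Finset.sum_sub_distrib, ← Finset.sum_add_distrib]
      apply Finset.sum_congr rfl; intro i _
      rw [← Finset.sum_sub_distrib, ← Finset.sum_sub_distrib, ← Finset.sum_add_distrib]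
      apply Finset.sum_congr rfl; intro j _
      simp only [hg]; ring
    have hpos : 0 < ∑ i ∈ Finset.range q, ∑ j ∈ Finset.range q, g i j := by
      apply Finset.sum_pos'
      · intro i _
        exact Finset.sum_nonneg fun j _ => crossSign h _ _
      · refine ⟨0, by simp; omega, ?_⟩
        apply Finset.sum_pos'
        · intro j _
          exact crossSign h _ _
        · refine ⟨1, by simp; omega, ?_⟩
          have h0 : w 0 = 0 := by simp [hw, leeW]
          have h1 : w 1 = 1 := by simp [hw, lee1 q hq]
          simp only [hg, h0, h1]
          have : Real.exp (-β₂ * 1) < Real.exp (-β₁ * 1) := by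
            rw [Real.exp_lt_exp]; linarith
          have e0 : (-β₁ : ℝ) * 0 = 0 := by ring
          have e0' : (-β₂ : ℝ) * 0 = 0 := by ring
          rw [e0, e0', Real.exp_zero]
          nlinarith [Real.exp_pos (-β₁ * 1), Real.exp_pos (-β₂ * 1)]
    linarith
  linarith

lemma lee_le (q i : ℕ) : leeW q i ≤ q / 2 := by simp [leeW]; omega

lemma Fmem (q : ℕ) (hq : 2 ≤ q) (β : ℝ) : Ffun q β ∈ Set.Ioo (0:ℝ) ((q/2 : ℕ) : ℝ) := by
  have hZ := Zpos q hq β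
  constructor
  · exact div_pos (numPos q hq β) hZ
  · rw [Ffun, div_lt_iff₀ hZ, Zfun, numFun, Finset.mul_sum]
    apply Finset.sum_lt_sum
    · intro i _
      apply mul_le_mul_of_nonneg_right _ (Real.exp_pos _).le
      exact_mod_cast lee_le q i
    · refine ⟨0, Finset.mem_range.mpr (by omega), ?_⟩
      have h0 : leeW q 0 = 0 := by simp [leeW]
      rw [h0]
      simp only [Nat.cast_zero, zero_mul]
      apply mul_pos _ (Real.exp_pos _)
      have : 1 ≤ q / 2 := by omega
      exact_mod_cast Nat.lt_of_lt_of_le Nat.zero_lt_one this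

lemma Fcont (q : ℕ) (hq : 2 ≤ q) : Continuous (Ffun q) := by
  have hn : Continuous (numFun q) := by
    apply continuous_finset_sum
    intro i _
    exact continuous_const.mul ((continuous_neg.mul continuous_const).rexp)
  have hz : Continuous (Zfun q) := by
    apply continuous_finset_sum
    intro i _
    exact (continuous_neg.mul continuous_const).rexp
  exact hn.div hz fun β => (Zpos q hq β).ne'

lemma FtendstoTop (q : ℕ) (hq : 2 ≤ q) : Tendsto (Ffun q) atTop (𝓝 0) := by
  have hnum : Tendsto (numFun q) atTop (𝓝 0) := by
    have : Tendsto (fun β => ∑ i ∈ Finset.range q,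
        (leeW q i : ℝ) * Real.exp (-β * (leeW q i : ℝ))) atTop
        (𝓝 (∑ i ∈ Finset.range q, 0)) := by
      apply tendsto_finset_sum
      intro i _
      rcases Nat.eq_zero_or_pos (leeW q i) with h | h
      · simp [h]
      · rw [show (0:ℝ) = (leeW q i : ℝ) * 0 by ring]
        apply Tendsto.const_mul
        apply Real.tendsto_exp_atBot.comp
        apply Tendsto.atBot_mul_const (by exact_mod_cast h)
        exact tendsto_neg_atTop_atBot.comp tendsto_id
    rw [Finset.sum_const, smul_zero] at this
    exact this
  have hle : ∀ β, Ffun q β ≤ numFun q β := by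
    intro β
    rw [Ffun, div_le_iff₀ (Zpos q hq β)]
    have hZ1 : 1 ≤ Zfun q β := by
      rw [Zfun]
      calc (1:ℝ) = Real.exp (-β * ((leeW q 0 : ℕ) : ℝ)) := by simp [leeW]
        _ ≤ _ := Finset.single_le_sum (f := fun i => Real.exp (-β * ((leeW q i : ℕ) : ℝ)))
            (fun i _ => (Real.exp_pos _).le) (Finset.mem_range.mpr (show 0 < q by omega))
    nlinarith [numPos q hq β]
  exact tendsto_of_tendsto_of_tendsto_of_le_of_le tendsto_const_nhds hnum
    (fun β => (Fmem q hq β).1.le) hle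

lemma FtendstoBot (q : ℕ) (hq : 2 ≤ q) : Tendsto (Ffun q) atBot (𝓝 ((q/2 : ℕ) : ℝ)) := by
  set m := q / 2 with hm
  set E : ℕ → ℝ → ℝ := fun i β => Real.exp (β * ((m:ℝ) - (leeW q i : ℝ))) with hE
  have hrw : ∀ β, Ffun q β =
      (∑ i ∈ Finset.range q, (leeW q i : ℝ) * E i β)
      / (∑ i ∈ Finset.range q, E i β) := by
    intro β
    have en : (∑ i ∈ Finset.range q, (leeW q i : ℝ) * E i β)
        = numFun q β * Real.exp (β * m) := by
      rw [numFun, Finset.sum_mul]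
      apply Finset.sum_congr rfl
      intro i _
      rw [hE, mul_assoc, ← Real.exp_add]
      ring_nf
    have ed : (∑ i ∈ Finset.range q, E i β) = Zfun q β * Real.exp (β * m) := by
      rw [Zfun, Finset.sum_mul]
      apply Finset.sum_congr rfl
      intro i _
      rw [hE, ← Real.exp_add]
      ring_nf
    rw [en, ed, mul_div_mul_right _ _ (Real.exp_ne_zero _), Ffun]
  set c : ℝ := ∑ i ∈ Finset.range q, (if leeW q i = m then (1:ℝ) else 0) with hc
  have hcpos : 0 < c := by
    rw [hc]
    apply Finset.sum_pos' (fun i _ => by positivity)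
    refine ⟨m, Finset.mem_range.mpr (by omega), ?_⟩
    have : leeW q m = m := by simp [leeW]; omega
    simp [this]
  have hterm : ∀ i ∈ Finset.range q, Tendsto (fun β => E i β) atBot
      (𝓝 (if leeW q i = m then (1:ℝ) else 0)) := by
    intro i _
    by_cases h : leeW q i = m
    · simp only [h, if_pos, hE, sub_self, mul_zero, Real.exp_zero]
      exact tendsto_const_nhds
    · have hlt : leeW q i < m := lt_of_le_of_ne (lee_le q i) h
      simp only [if_neg h, hE]
      apply Real.tendsto_exp_atBot.comp
      apply Tendsto.atBot_mul_const' (by simp; exact_mod_cast hlt) tendsto_id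
  have hden : Tendsto (fun β => ∑ i ∈ Finset.range q, E i β) atBot (𝓝 c) :=
    tendsto_finset_sum _ hterm
  have hnum : Tendsto (fun β => ∑ i ∈ Finset.range q, (leeW q i : ℝ) * E i β) atBot
      (𝓝 ((m:ℝ) * c)) := by
    rw [hc, Finset.mul_sum]
    apply tendsto_finset_sum
    intro i hi
    have := (hterm i hi).const_mul (leeW q i : ℝ)
    by_cases h : leeW q i = m
    · simpa [h] using this
    · simpa [h] using this
  have := hnum.div hden hcpos.ne'
  rw [mul_div_assoc, div_self hcpos.ne', mul_one] at this
  exact this.congr fun β => (hrw β).symm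

lemma Fzero (q : ℕ) (hq : 2 ≤ q) : Ffun q 0 = deltaQ q := by
  have hn : numFun q 0 = ((∑ i ∈ Finset.range q, leeW q i : ℕ) : ℝ) := by
    rw [numFun]
    push_cast
    apply Finset.sum_congr rfl
    intro i _
    simp
  have hz : Zfun q 0 = (q : ℝ) := by
    rw [Zfun]
    simp
  have hq0 : (q:ℝ) ≠ 0 := by positivity
  have hS : 4 * ((∑ i ∈ Finset.range q, leeW q i : ℕ) : ℝ) + (q % 2 : ℕ) = (q:ℝ) * q := by
    exact_mod_cast congrArg (Nat.cast : ℕ → ℝ) (leeSum q)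
  rw [Ffun, hn, hz, deltaQ]
  rcases Nat.even_or_odd q with h | h
  · have h2 : q % 2 = 0 := Nat.even_iff.mp h
    rw [if_pos h2]
    rw [h2] at hS
    push_cast at hS
    field_simp
    push_cast
    linarith
  · have h2 : q % 2 = 1 := Nat.odd_iff.mp h
    rw [if_neg (by omega)]
    rw [h2] at hS
    push_cast at hS
    field_simp
    have hS' := congrArg (· * (q:ℝ)) hS
    push_cast
    ring_nf at hS' ⊢
    linarith

theorem stmt1 (q : ℕ) (hq : 2 ≤ q) :
    StrictAnti (Ffun q)
    ∧ Set.BijOn (Ffun q) Set.univ (Set.Ioo (0 : ℝ) ((q / 2 : ℕ) : ℝ))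
    ∧ ∀ δ : ℝ, 0 < δ → δ < ((q / 2 : ℕ) : ℝ) →
        (∃! β : ℝ, numFun q β = δ * Zfun q β)
        ∧ ∀ β : ℝ, numFun q β = δ * Zfun q β →
            ((0 < β ↔ δ < deltaQ q) ∧ (β = 0 ↔ δ = deltaQ q)) := by
  have hSA := FstrictAnti q hq
  have hsurj : ∀ δ : ℝ, 0 < δ → δ < ((q/2 : ℕ) : ℝ) → ∃ β, Ffun q β = δ := by
    intro δ hδ1 hδ2
    have h1 : ∀ᶠ β in atBot, δ < Ffun q β :=
      (FtendstoBot q hq).eventually (eventually_gt_nhds hδ2)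
    have h2 : ∀ᶠ β in atTop, Ffun q β < δ :=
      (FtendstoTop q hq).eventually (eventually_lt_nhds hδ1)
    obtain ⟨u, hu⟩ := h1.exists
    obtain ⟨v, hv⟩ := h2.exists
    have huv : u ≤ v := le_of_lt (hSA.lt_iff_gt.mp (lt_trans hv hu))
    have := intermediate_value_Icc' huv (Fcont q hq).continuousOn
    obtain ⟨x, _, hx⟩ := this ⟨hv.le, hu.le⟩
    exact ⟨x, hx⟩
  have key : ∀ β δ : ℝ, (numFun q β = δ * Zfun q β ↔ Ffun q β = δ) := by
    intro β δ
    rw [Ffun, div_eq_iff (Zpos q hq β).ne', mul_comm]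
  refine ⟨hSA, ⟨fun β _ => Fmem q hq β, hSA.injective.injOn, ?_⟩, ?_⟩
  · intro δ hδ
    obtain ⟨β, hβ⟩ := hsurj δ hδ.1 hδ.2
    exact ⟨β, Set.mem_univ _, hβ⟩
  · intro δ hδ1 hδ2
    obtain ⟨β₀, hβ₀⟩ := hsurj δ hδ1 hδ2
    constructor
    · refine ⟨β₀, (key β₀ δ).mpr hβ₀, ?_⟩
      intro y hy
      exact hSA.injective (((key y δ).mp hy).trans hβ₀.symm)
    · intro β hβ
      have hF : Ffun q β = δ := (key β δ).mp hβ
      have hd : deltaQ q = Ffun q 0 := (Fzero q hq).symm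
      constructor
      · rw [hd, ← hF]
        exact ⟨fun h => hSA h, fun h => hSA.lt_iff_gt.mp h⟩
      · constructor
        · rintro rfl; rw [hd, ← hF]
        · intro h
          apply hSA.injective
          rw [hF, Fzero q hq, h]
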